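/- In the mixed-drift setting, h(x) ≤ h₁(x₁) for all x = (x₁,x₂) in the open quadrant, where h₁(x₁) = x₁ − E[(x₁ + S₁(τ_{x₁})); τ_{x₁} < ∞] is the one-dimensional harmonic function of the first coordinate. -/

import Mathlib

open MeasureTheory ProbabilityTheory Filter Set
open scoped ENNReal NNReal

noncomputable def partialSum {Ω : Type*} (X : ℕ → Ω → ℝ) (n : ℕ) (ω : Ω) : ℝ :=
  ∑ i ∈ Finset.range n, X i ω

noncomputable def exitTime {Ω : Type*} (X : ℕ → Ω → ℝ) (x : ℝ) (ω : Ω) : ℕ∞ :=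
  sInf {n : ℕ∞ | ∃ m : ℕ, (m : ℕ∞) = n ∧ 1 ≤ m ∧ x + partialSum X m ω ≤ 0}

/-- One-dimensional harmonic function `h₁(x) = x − E[(x + S(τ_x)); τ_x < ∞]`. -/
noncomputable def hOne {Ω : Type*} [MeasureSpace Ω] (X : ℕ → Ω → ℝ) (x : ℝ) : ℝ :=
  x - ∫ ω, Set.indicator {ω | exitTime X x ω ≠ ⊤}
    (fun ω => x + partialSum X (exitTime X x ω).toNat ω) ω ∂ℙ

noncomputable def partialSum2 {Ω : Type*} (X : ℕ → Ω → ℝ × ℝ) (n : ℕ) (ω : Ω) : ℝ × ℝ :=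
  ∑ i ∈ Finset.range n, X i ω

noncomputable def exitTimeQuadrant {Ω : Type*} (X : ℕ → Ω → ℝ × ℝ) (x : ℝ × ℝ) (ω : Ω) : ℕ∞ :=
  sInf {n : ℕ∞ | ∃ m : ℕ, (m : ℕ∞) = n ∧ 1 ≤ m ∧
    ¬ (0 < x.1 + (partialSum2 X m ω).1 ∧ 0 < x.2 + (partialSum2 X m ω).2)}

/-- `h(x) = x₁ − E[(x₁ + S₁(τ_x)); τ_x < ∞]`. -/
noncomputable def hQ {Ω : Type*} [MeasureSpace Ω] (X : ℕ → Ω → ℝ × ℝ) (x : ℝ × ℝ) : ℝ :=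
  x.1 - ∫ ω, Set.indicator {ω | exitTimeQuadrant X x ω ≠ ⊤}
    (fun ω => x.1 + (partialSum2 X (exitTimeQuadrant X x ω).toNat ω).1) ω ∂ℙ


lemma exit_set_eq (P : ℕ → Prop) :
    {n : ℕ∞ | ∃ m : ℕ, (m : ℕ∞) = n ∧ P m} = (Nat.cast : ℕ → ℕ∞) '' {m | P m} := by
  ext n
  constructor
  · rintro ⟨m, rfl, h⟩; exact ⟨m, h, rfl⟩
  · rintro ⟨m, h, rfl⟩; exact ⟨m, rfl, h⟩

lemma sInf_cast_image {s : Set ℕ} (hs : s.Nonempty) :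
    sInf ((Nat.cast : ℕ → ℕ∞) '' s) = ((sInf s : ℕ) : ℕ∞) := by
  apply le_antisymm
  · exact sInf_le (Set.mem_image_of_mem _ (Nat.sInf_mem hs))
  · apply le_sInf
    rintro _ ⟨m, hm, rfl⟩
    exact_mod_cast Nat.sInf_le hm

lemma partialSum2_fst {Ω : Type*} (X : ℕ → Ω → ℝ × ℝ) (m : ℕ) (ω : Ω) :
    (partialSum2 X m ω).1 = partialSum (fun n ω => (X n ω).1) m ω := by
  simp [partialSum2, partialSum, Prod.fst_sum]

/-- in the mixed-drift setting, `h(x) ≤ h₁(x₁)` on the open quadrant. -/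
theorem hQ_le_hOne
    {Ω : Type*} [MeasureSpace Ω] [IsProbabilityMeasure (ℙ : Measure Ω)]
    (X : ℕ → Ω → ℝ × ℝ) (X0 : Ω → ℝ × ℝ) (δ : ℝ) (hδ : 0 < δ)
    (hmeas : ∀ n, Measurable (X n))
    (hindep : iIndepFun X ℙ)
    (hident : ∀ n, IdentDistrib (X n) X0 ℙ ℙ)
    (hcent1 : ∫ ω, (X0 ω).1 ∂ℙ = 0)
    (hmom1 : Integrable (fun ω => |(X0 ω).1| ^ (2 + δ)) ℙ)
    (hsq2 : Integrable (fun ω => (X0 ω).2 ^ 2) ℙ)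
    (hdrift2 : 0 < ∫ ω, (X0 ω).2 ∂ℙ)
    (hmom2 : Integrable (fun ω => max (-(X0 ω).2) 0 ^ (3 + δ)) ℙ)
    (hfin : ∀ x : ℝ × ℝ, 0 < x.1 → 0 < x.2 →
      Integrable (Set.indicator {ω | exitTimeQuadrant X x ω ≠ ⊤}
        (fun ω => x.1 + (partialSum2 X (exitTimeQuadrant X x ω).toNat ω).1)) ℙ)
    (hfin1 : ∀ x₁ : ℝ, 0 < x₁ →
      Integrable (Set.indicator {ω | exitTime (fun n ω => (X n ω).1) x₁ ω ≠ ⊤}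
        (fun ω => x₁ + partialSum (fun n ω => (X n ω).1) (exitTime (fun n ω => (X n ω).1) x₁ ω).toNat ω)) ℙ)
    (x : ℝ × ℝ) (hx1 : 0 < x.1) (hx2 : 0 < x.2) :
    hQ X x ≤ hOne (fun n ω => (X n ω).1) x.1 := by
  unfold hQ hOne
  apply sub_le_sub_left
  apply MeasureTheory.integral_mono (hfin1 x.1 hx1) (hfin x hx1 hx2)
  intro ω
  set Y : ℕ → Ω → ℝ := fun n ω => (X n ω).1 with hY
  set S1 : Set ℕ := {m | 1 ≤ m ∧ x.1 + partialSum Y m ω ≤ 0} with hS1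
  set SQ : Set ℕ := {m | 1 ≤ m ∧
    ¬ (0 < x.1 + (partialSum2 X m ω).1 ∧ 0 < x.2 + (partialSum2 X m ω).2)} with hSQ
  have hτ1 : exitTime Y x.1 ω = sInf ((Nat.cast : ℕ → ℕ∞) '' S1) := by
    rw [exitTime, exit_set_eq]
  have hτQ : exitTimeQuadrant X x ω = sInf ((Nat.cast : ℕ → ℕ∞) '' SQ) := by
    rw [exitTimeQuadrant, exit_set_eq]
  have hsub : S1 ⊆ SQ := by
    rintro m ⟨h1, h2⟩
    refine ⟨h1, fun hpos => absurd h2 (not_le.mpr ?_)⟩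
    rw [← partialSum2_fst X m ω]
    exact hpos.1
  have hle : exitTimeQuadrant X x ω ≤ exitTime Y x.1 ω := by
    rw [hτ1, hτQ]
    exact sInf_le_sInf (Set.image_mono hsub)
  by_cases hQtop : exitTimeQuadrant X x ω = ⊤
  · have h1top : exitTime Y x.1 ω = ⊤ := top_le_iff.mp (hQtop ▸ hle)
    rw [Set.indicator_of_notMem (by simp [h1top]),
      Set.indicator_of_notMem (by simp [hQtop])]
  · have hSQne : SQ.Nonempty := by
      by_contra hne
      rw [Set.not_nonempty_iff_eq_empty] at hne
      rw [hτQ, hne, Set.image_empty, sInf_empty] at hQtop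
      exact hQtop rfl
    set n : ℕ := sInf SQ with hn
    have hnSQ : n ∈ SQ := Nat.sInf_mem hSQne
    have hτQn : exitTimeQuadrant X x ω = (n : ℕ∞) := by
      rw [hτQ, sInf_cast_image hSQne]
    have htn : (exitTimeQuadrant X x ω).toNat = n := by rw [hτQn]; simp
    have hRHS : ({ω | exitTimeQuadrant X x ω ≠ ⊤}.indicator
        (fun ω => x.1 + (partialSum2 X (exitTimeQuadrant X x ω).toNat ω).1)) ω
        = x.1 + (partialSum2 X n ω).1 := by
      rw [Set.indicator_of_mem (by simp [hτQn]), htn]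
    rw [hRHS]
    by_cases hc : x.1 + (partialSum2 X n ω).1 ≤ 0
    · -- first coordinate caused the exit: τ₁ = τ and the terms coincide
      have hnS1 : n ∈ S1 := ⟨hnSQ.1, by rw [← partialSum2_fst X n ω]; exact hc⟩
      have hτ1n : exitTime Y x.1 ω = (n : ℕ∞) := by
        refine le_antisymm ?_ (hτQn ▸ hle)
        rw [hτ1]
        exact sInf_le (Set.mem_image_of_mem _ hnS1)
      rw [Set.indicator_of_mem (by simp [hτ1n]), hτ1n]
      simp [partialSum2_fst X n ω]
      exact le_rfl
    · push_neg at hc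
      by_cases h1top : exitTime Y x.1 ω = ⊤
      · rw [Set.indicator_of_notMem (by simp [h1top])]
        exact hc.le
      · have hS1ne : S1.Nonempty := by
          by_contra hne
          rw [Set.not_nonempty_iff_eq_empty] at hne
          rw [hτ1, hne, Set.image_empty, sInf_empty] at h1top
          exact h1top rfl
        have hmS1 : sInf S1 ∈ S1 := Nat.sInf_mem hS1ne
        have hτ1m : exitTime Y x.1 ω = ((sInf S1 : ℕ) : ℕ∞) := by
          rw [hτ1, sInf_cast_image hS1ne]
        rw [Set.indicator_of_mem (by simp [hτ1m]), hτ1m]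
        simp only [ENat.toNat_coe]
        exact le_trans hmS1.2 hc.le
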